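/- Let Φ_D be a quantum m-stochastic channel on density matrices of order N with m ≥ 2. If ρ_1, ..., ρ_{m−1} are density matrices one of which equals the maximally mixed state ρ_* = I/N, then Φ_D[ρ_1 ⊗ ⋯ ⊗ ρ_{m−1}] = ρ_*. -/

import Mathlib

open Matrix ComplexOrder

/-- The action of a multipartite matrix `D` on `(ℂ^N)^{⊗m}` as a multilinear map:
the output lives in slot `t`, the matrix `ρ s` is fed (via `I ⊗ ρ₁^⊤ ⊗ ⋯`) into each
input slot `s ≠ t`, and all input slots are traced out.  In components,
`(Φ ρ)_{a b} = Σ_{k l : Fin m → Fin N, k t = a, l t = b} D_{k l} Π_{s ≠ t} (ρ s)_{k s, l s}`. -/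
noncomputable def qAct {N m : ℕ} (D : Matrix (Fin m → Fin N) (Fin m → Fin N) ℂ)
    (t : Fin m) (ρ : Fin m → Matrix (Fin N) (Fin N) ℂ) : Matrix (Fin N) (Fin N) ℂ :=
  Matrix.of fun a b => ∑ k : Fin m → Fin N, ∑ l : Fin m → Fin N,
    if k t = a ∧ l t = b then D k l * ∏ s ∈ Finset.univ.erase t, ρ s (k s) (l s) else 0

/-- A density matrix: positive semidefinite with unit trace. -/
def IsDensity {N : ℕ} (ρ : Matrix (Fin N) (Fin N) ℂ) : Prop :=
  ρ.PosSemidef ∧ ρ.trace = 1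

/-- A quantum `m`-stochastic channel: the dynamical matrix `D` is positive semidefinite,
and for every choice of output slot `t`, feeding density matrices into the remaining
slots yields a trace-preserving (hence, with `D ≥ 0`, completely positive) map. -/
def QMStochastic {N m : ℕ} (D : Matrix (Fin m → Fin N) (Fin m → Fin N) ℂ) : Prop :=
  D.PosSemidef ∧
    ∀ (t : Fin m) (ρ : Fin m → Matrix (Fin N) (Fin N) ℂ),
      (∀ s : Fin m, s ≠ t → IsDensity (ρ s)) → (qAct D t ρ).trace = 1

/-! ### Auxiliary lemmas -/

lemma sum_ite_pair {N : ℕ} (f : Fin N → Fin N → ℂ) (p q : Fin N) :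
    ∑ a : Fin N, ∑ b : Fin N, (if p = a ∧ q = b then f a b else 0) = f p q := by
  simp [ite_and, Finset.sum_ite_eq]

lemma sum_ite_diag {N : ℕ} (x : ℂ) (p q : Fin N) :
    ∑ c : Fin N, (if p = c ∧ q = c then x else 0) = if p = q then x else 0 := by
  rcases eq_or_ne p q with h | h
  · subst h; simp [ite_and, Finset.sum_ite_eq]
  · rw [if_neg h]
    refine Finset.sum_eq_zero fun c _ => ?_
    rw [if_neg]
    rintro ⟨rfl, rfl⟩; exact h rfl

lemma swap3 {α β γ : Type*} [Fintype α] [Fintype β] [Fintype γ] (f : α → β → γ → ℂ) :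
    ∑ a, ∑ k, ∑ l, f a k l = ∑ k, ∑ l, ∑ a, f a k l := by
  rw [Finset.sum_comm]
  exact Finset.sum_congr rfl fun k _ => Finset.sum_comm

lemma swap4 {α β : Type*} [Fintype α] [Fintype β] (f : α → α → β → β → ℂ) :
    ∑ a, ∑ b, ∑ k, ∑ l, f a b k l = ∑ k, ∑ l, ∑ a, ∑ b, f a b k l := by
  calc ∑ a, ∑ b, ∑ k, ∑ l, f a b k l
      = ∑ a, ∑ k, ∑ l, ∑ b, f a b k l := Finset.sum_congr rfl fun a _ => swap3 _
    _ = ∑ k, ∑ l, ∑ a, ∑ b, f a b k l := swap3 _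

lemma trace_qAct {N m : ℕ} (D : Matrix (Fin m → Fin N) (Fin m → Fin N) ℂ)
    (t : Fin m) (ρ : Fin m → Matrix (Fin N) (Fin N) ℂ) :
    (qAct D t ρ).trace = ∑ k : Fin m → Fin N, ∑ l : Fin m → Fin N,
      if k t = l t then D k l * ∏ s ∈ Finset.univ.erase t, ρ s (k s) (l s) else 0 := by
  simp only [Matrix.trace, Matrix.diag, qAct, Matrix.of_apply]
  rw [Finset.sum_comm]
  refine Finset.sum_congr rfl fun k _ => ?_
  rw [Finset.sum_comm]
  exact Finset.sum_congr rfl fun l _ => sum_ite_diag _ _ _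

lemma pair_qAct {N m : ℕ} (D : Matrix (Fin m → Fin N) (Fin m → Fin N) ℂ)
    (t : Fin m) (ρ : Fin m → Matrix (Fin N) (Fin N) ℂ) (σ : Matrix (Fin N) (Fin N) ℂ) :
    ∑ a : Fin N, ∑ b : Fin N, σ a b * qAct D t ρ a b
      = ∑ k : Fin m → Fin N, ∑ l : Fin m → Fin N,
        σ (k t) (l t) * (D k l * ∏ s ∈ Finset.univ.erase t, ρ s (k s) (l s)) := by
  simp only [qAct, Matrix.of_apply, Finset.mul_sum]
  rw [swap4]
  refine Finset.sum_congr rfl fun k _ => Finset.sum_congr rfl fun l _ => ?_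
  simp only [mul_ite, mul_zero]
  exact sum_ite_pair (fun a b => σ a b * _) _ _

set_option linter.unnecessarySeqFocus false in
lemma keyA {N m : ℕ} (D : Matrix (Fin m → Fin N) (Fin m → Fin N) ℂ)
    (hD : QMStochastic D) {t0 s0 : Fin m} (hne : s0 ≠ t0)
    (ρ : Fin m → Matrix (Fin N) (Fin N) ℂ)
    (hρ : ∀ s, s ≠ t0 → IsDensity (ρ s)) (hs : ρ s0 = (N:ℂ)⁻¹ • 1)
    (σ : Matrix (Fin N) (Fin N) ℂ) (hσ : IsDensity σ) :
    ∑ a : Fin N, ∑ b : Fin N, σ a b * qAct D t0 ρ a b = (N:ℂ)⁻¹ := by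
  classical
  set ρ'' := Function.update ρ t0 σ with hρ''
  have hdens : ∀ s : Fin m, s ≠ s0 → IsDensity (ρ'' s) := by
    intro s hs'
    rcases eq_or_ne s t0 with rfl | h
    · simpa [hρ''] using hσ
    · simpa [hρ'', Function.update_of_ne h] using hρ s h
  have htr := hD.2 s0 ρ'' hdens
  rw [trace_qAct] at htr
  rw [pair_qAct]
  calc ∑ k : Fin m → Fin N, ∑ l : Fin m → Fin N,
        σ (k t0) (l t0) * (D k l * ∏ s ∈ Finset.univ.erase t0, ρ s (k s) (l s))
      = (N:ℂ)⁻¹ * ∑ k : Fin m → Fin N, ∑ l : Fin m → Fin N,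
        (if k s0 = l s0 then D k l * ∏ s ∈ Finset.univ.erase s0, ρ'' s (k s) (l s) else 0) := by
        rw [Finset.mul_sum]
        refine Finset.sum_congr rfl fun k _ => ?_
        rw [Finset.mul_sum]
        refine Finset.sum_congr rfl fun l _ => ?_
        have h1 : ∏ s ∈ Finset.univ.erase t0, ρ s (k s) (l s)
            = ρ s0 (k s0) (l s0) * ∏ s ∈ (Finset.univ.erase t0).erase s0, ρ s (k s) (l s) :=
          (Finset.mul_prod_erase _ _ (by simp [hne])).symm
        have h2 : ∏ s ∈ Finset.univ.erase s0, ρ'' s (k s) (l s)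
            = ρ'' t0 (k t0) (l t0) * ∏ s ∈ (Finset.univ.erase s0).erase t0, ρ'' s (k s) (l s) :=
          (Finset.mul_prod_erase _ _ (by simp [Ne.symm hne])).symm
        have h3 : ∏ s ∈ (Finset.univ.erase s0).erase t0, ρ'' s (k s) (l s)
            = ∏ s ∈ (Finset.univ.erase t0).erase s0, ρ s (k s) (l s) := by
          rw [Finset.erase_right_comm]
          refine Finset.prod_congr rfl fun s hsmem => ?_
          have hst : s ≠ t0 := (Finset.mem_erase.1 (Finset.mem_erase.1 hsmem).2).1
          rw [hρ'', Function.update_of_ne hst]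
        have h4 : ρ'' t0 = σ := Function.update_self _ _ _
        have h5 : ρ s0 (k s0) (l s0) = (N:ℂ)⁻¹ * (if k s0 = l s0 then 1 else 0) := by
          rw [hs]; simp [Matrix.smul_apply, Matrix.one_apply]
        rw [h1, h2, h3, h4, h5]
        by_cases h : k s0 = l s0 <;> simp [h] <;> ring
    _ = (N:ℂ)⁻¹ := by rw [htr, mul_one]

lemma form_factor {N : ℕ} (c : ℂ) (v x : Fin N → ℂ) :
    ∑ a : Fin N, star (x a) * (∑ b : Fin N, c * (v a * star (v b)) * x b)
      = c * (star (∑ b : Fin N, star (v b) * x b) * (∑ b : Fin N, star (v b) * x b)) := by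
  have hz : star (∑ b : Fin N, star (v b) * x b) = ∑ a : Fin N, star (x a) * v a := by
    rw [star_sum]
    exact Finset.sum_congr rfl fun b _ => by rw [star_mul', star_star, mul_comm]
  rw [hz]
  simp only [Finset.mul_sum, Finset.sum_mul]
  rw [Finset.sum_comm]
  exact Finset.sum_congr rfl fun a _ => Finset.sum_congr rfl fun b _ => by ring

lemma sum_normSq_pos {N : ℕ} (v : Fin N → ℂ) (hv : v ≠ 0) :
    0 < ∑ i : Fin N, Complex.normSq (v i) := by
  obtain ⟨a, ha⟩ := Function.ne_iff.1 hv
  have h1 : 0 < Complex.normSq (v a) := Complex.normSq_pos.2 ha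
  have h2 : Complex.normSq (v a) ≤ ∑ i : Fin N, Complex.normSq (v i) :=
    Finset.single_le_sum (fun i _ => Complex.normSq_nonneg (v i)) (Finset.mem_univ a)
  linarith

lemma vec_density {N : ℕ} (v : Fin N → ℂ) (hv : v ≠ 0) :
    IsDensity (Matrix.of fun a b =>
      ((((∑ i : Fin N, Complex.normSq (v i))⁻¹ : ℝ) : ℂ)) * (v a * star (v b))) := by
  set r : ℝ := ∑ i : Fin N, Complex.normSq (v i) with hr
  have hrpos : 0 < r := sum_normSq_pos v hv
  constructor
  · refine Matrix.PosSemidef.of_dotProduct_mulVec_nonneg ?_ ?_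
    · ext i j
      simp only [Matrix.conjTranspose_apply, Matrix.of_apply, Complex.star_def, _root_.map_mul,
        Complex.conj_ofReal, Complex.conj_conj]
      ring
    · intro x
      have : star x ⬝ᵥ (Matrix.of fun a b => (((r⁻¹ : ℝ) : ℂ)) * (v a * star (v b))) *ᵥ x
          = ((r⁻¹ : ℝ) : ℂ) * (star (∑ b : Fin N, star (v b) * x b)
              * (∑ b : Fin N, star (v b) * x b)) := by
        simp only [dotProduct, Matrix.mulVec, Matrix.of_apply]
        exact form_factor _ v x
      rw [this]
      exact mul_nonneg (by
        rw [Complex.zero_le_real]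
        positivity) (star_mul_self_nonneg _)
  · simp only [Matrix.trace, Matrix.diag, Matrix.of_apply]
    have : ∀ a, (((r⁻¹ : ℝ) : ℂ)) * (v a * star (v a))
        = (((r⁻¹ * Complex.normSq (v a) : ℝ) : ℂ)) := by
      intro a
      rw [Complex.star_def, Complex.mul_conj]
      push_cast
      ring
    rw [Finset.sum_congr rfl fun a _ => this a, ← Complex.ofReal_sum, ← Finset.mul_sum, ← hr]
    rw [inv_mul_cancel₀ (ne_of_gt hrpos)]
    simp

lemma quad_pair {N : ℕ} (X : Matrix (Fin N) (Fin N) ℂ) {a b : Fin N} (hab : a ≠ b) (v : Fin N → ℂ)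
    (hv : ∀ x, x ≠ a → x ≠ b → v x = 0) :
    ∑ a' : Fin N, ∑ b' : Fin N, (v a' * star (v b')) * X a' b'
      = (v a * star (v a)) * X a a + (v a * star (v b)) * X a b
        + ((v b * star (v a)) * X b a + (v b * star (v b)) * X b b) := by
  have inner : ∀ p, ∑ b' : Fin N, (v p * star (v b')) * X p b'
      = (v p * star (v a)) * X p a + (v p * star (v b)) * X p b :=
    fun p => Finset.sum_eq_add_of_mem a b (Finset.mem_univ _) (Finset.mem_univ _) hab
      (fun c _ hc => by rw [hv c hc.1 hc.2]; simp)
  rw [Finset.sum_eq_add_of_mem a b (Finset.mem_univ _) (Finset.mem_univ _) hab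
      (fun c _ hc => by rw [Finset.sum_eq_zero]; intro b' _; rw [hv c hc.1 hc.2]; simp),
    inner a, inner b]

lemma quad_single {N : ℕ} (X : Matrix (Fin N) (Fin N) ℂ) (a : Fin N) (v : Fin N → ℂ)
    (hv : ∀ x, x ≠ a → v x = 0) :
    ∑ a' : Fin N, ∑ b' : Fin N, (v a' * star (v b')) * X a' b' = (v a * star (v a)) * X a a := by
  have inner : ∀ p, ∑ b' : Fin N, (v p * star (v b')) * X p b'
      = (v p * star (v a)) * X p a :=
    fun p => Finset.sum_eq_single_of_mem a (Finset.mem_univ _)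
      (fun c _ hc => by rw [hv c hc]; simp)
  rw [Finset.sum_eq_single_of_mem a (Finset.mem_univ _)
      (fun c _ hc => by rw [Finset.sum_eq_zero]; intro b' _; rw [hv c hc]; simp),
    inner a]

theorem qAct_maximally_mixed {N m : ℕ} (hm : 2 ≤ m)
    (D : Matrix (Fin m → Fin N) (Fin m → Fin N) ℂ) (hD : QMStochastic D)
    (ρ : Fin m → Matrix (Fin N) (Fin N) ℂ)
    (hρ : ∀ s : Fin m, s ≠ ⟨0, by omega⟩ → IsDensity (ρ s))
    (hmix : ∃ s : Fin m, s ≠ ⟨0, by omega⟩ ∧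
      ρ s = (N : ℂ)⁻¹ • (1 : Matrix (Fin N) (Fin N) ℂ)) :
    qAct D ⟨0, by omega⟩ ρ = (N : ℂ)⁻¹ • (1 : Matrix (Fin N) (Fin N) ℂ) := by
  classical
  obtain ⟨s0, hs0ne, hs0⟩ := hmix
  set t0 : Fin m := ⟨0, by omega⟩ with ht0
  rcases Nat.eq_zero_or_pos N with hN0 | hNpos
  · exfalso
    have htrρ := (hρ s0 hs0ne).2
    subst hN0
    simp [Matrix.trace] at htrρ
  set X := qAct D t0 ρ with hX
  have hkey : ∀ σ : Matrix (Fin N) (Fin N) ℂ, IsDensity σ →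
      ∑ a : Fin N, ∑ b : Fin N, σ a b * X a b = (N:ℂ)⁻¹ :=
    fun σ hσ => keyA D hD hs0ne ρ hρ hs0 σ hσ
  have hV : ∀ v : Fin N → ℂ, v ≠ 0 →
      ∑ a : Fin N, ∑ b : Fin N, (v a * star (v b)) * X a b
        = (((∑ i : Fin N, Complex.normSq (v i) : ℝ)) : ℂ) * (N:ℂ)⁻¹ := by
    intro v hv
    have hd := hkey _ (vec_density v hv)
    set r : ℝ := ∑ i : Fin N, Complex.normSq (v i) with hr
    have hrpos : 0 < r := sum_normSq_pos v hv
    have hrne : ((r : ℝ) : ℂ) ≠ 0 := by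
      exact_mod_cast Complex.ofReal_ne_zero.2 (ne_of_gt hrpos)
    simp only [Matrix.of_apply] at hd
    have hfac : ∑ a : Fin N, ∑ b : Fin N,
        (((r⁻¹ : ℝ) : ℂ)) * (v a * star (v b)) * X a b
        = ((r⁻¹ : ℝ) : ℂ) * ∑ a : Fin N, ∑ b : Fin N, (v a * star (v b)) * X a b := by
      rw [Finset.mul_sum]
      refine Finset.sum_congr rfl fun a _ => ?_
      rw [Finset.mul_sum]
      exact Finset.sum_congr rfl fun b _ => by ring
    rw [hfac] at hd
    have := congrArg (fun z => ((r : ℝ) : ℂ) * z) hd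
    rw [← mul_assoc] at this
    rw [show ((r : ℝ) : ℂ) * ((r⁻¹ : ℝ) : ℂ) = 1 by
      push_cast
      field_simp] at this
    rw [one_mul] at this
    exact this
  have hdiag : ∀ a : Fin N, X a a = (N:ℂ)⁻¹ := by
    intro a
    have hvne : (Pi.single a (1:ℂ) : Fin N → ℂ) ≠ 0 := by
      intro h
      have := congrFun h a
      simp [Pi.single_eq_same] at this
    have h1 := hV (Pi.single a 1) hvne
    rw [quad_single X a (Pi.single a (1:ℂ) : Fin N → ℂ)
      (fun x hx => Pi.single_eq_of_ne hx _)] at h1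
    have hsum : ∑ i : Fin N, Complex.normSq ((Pi.single a (1:ℂ) : Fin N → ℂ) i) = 1 := by
      rw [Finset.sum_eq_single_of_mem a (Finset.mem_univ _)
        (fun c _ hc => by rw [Pi.single_eq_of_ne hc]; simp)]
      simp [Pi.single_eq_same]
    rw [hsum] at h1
    simpa [Pi.single_eq_same] using h1
  ext a b
  rcases eq_or_ne a b with rfl | hab
  · rw [Matrix.smul_apply, Matrix.one_apply_eq, smul_eq_mul, mul_one]
    exact hdiag a
  · -- off-diagonal
    set v1 : Fin N → ℂ := Pi.single a 1 + Pi.single b 1 with hv1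
    set v2 : Fin N → ℂ := Pi.single a 1 + Pi.single b Complex.I with hv2
    have hsupp1 : ∀ x, x ≠ a → x ≠ b → v1 x = 0 := fun x hx1 hx2 => by
      simp [hv1, Pi.single_eq_of_ne hx1, Pi.single_eq_of_ne hx2]
    have hsupp2 : ∀ x, x ≠ a → x ≠ b → v2 x = 0 := fun x hx1 hx2 => by
      simp [hv2, Pi.single_eq_of_ne hx1, Pi.single_eq_of_ne hx2]
    have hv1a : v1 a = 1 := by
      simp [hv1, Pi.single_eq_same, Pi.single_eq_of_ne hab]
    have hv1b : v1 b = 1 := by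
      simp [hv1, Pi.single_eq_same, Pi.single_eq_of_ne (Ne.symm hab)]
    have hv2a : v2 a = 1 := by
      simp [hv2, Pi.single_eq_same, Pi.single_eq_of_ne hab]
    have hv2b : v2 b = Complex.I := by
      simp [hv2, Pi.single_eq_same, Pi.single_eq_of_ne (Ne.symm hab)]
    have hv1ne : v1 ≠ 0 := by
      intro h
      have := congrFun h a
      rw [hv1a] at this
      simp at this
    have hv2ne : v2 ≠ 0 := by
      intro h
      have := congrFun h a
      rw [hv2a] at this
      simp at this
    have hsum1 : ∑ i : Fin N, Complex.normSq (v1 i) = 2 := by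
      rw [Finset.sum_eq_add_of_mem a b (Finset.mem_univ _) (Finset.mem_univ _) hab
        (fun c _ hc => by rw [hsupp1 c hc.1 hc.2]; simp)]
      rw [hv1a, hv1b]
      norm_num
    have hsum2 : ∑ i : Fin N, Complex.normSq (v2 i) = 2 := by
      rw [Finset.sum_eq_add_of_mem a b (Finset.mem_univ _) (Finset.mem_univ _) hab
        (fun c _ hc => by rw [hsupp2 c hc.1 hc.2]; simp)]
      rw [hv2a, hv2b]
      simp [Complex.normSq_I]
      norm_num
    have h1 := hV v1 hv1ne
    rw [quad_pair X hab v1 hsupp1, hv1a, hv1b, hsum1, hdiag a, hdiag b] at h1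
    have h2 := hV v2 hv2ne
    rw [quad_pair X hab v2 hsupp2, hv2a, hv2b, hsum2, hdiag a, hdiag b] at h2
    push_cast at h1 h2
    simp only [star_one, one_mul, mul_one, Complex.star_def, Complex.conj_I] at h1 h2
    -- h1 : N⁻¹ + X a b + (X b a + N⁻¹) = 2 * N⁻¹ (essentially)
    -- h2 : involves -I and I coefficients
    have hIII : Complex.I * -Complex.I = 1 := by
      rw [mul_neg, Complex.I_mul_I, neg_neg]
    have hba : X b a = X a b := by
      have h2' : Complex.I * (X b a - X a b) = 0 := by
        have hII : Complex.I * -Complex.I = 1 := hIII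
        linear_combination h2 - hII * (N:ℂ)⁻¹
      rcases mul_eq_zero.1 h2' with h | h
      · exact absurd h Complex.I_ne_zero
      · exact sub_eq_zero.1 h
    have hzero : X a b = 0 := by
      rw [hba] at h1
      linear_combination h1 / 2
    rw [Matrix.smul_apply, Matrix.one_apply_ne hab, smul_zero]
    exact hzero
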